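/- Let R₀ ≥ 1 and let v : ℝ² → ℝ be twice continuously differentiable on {x : |x| ≥ R₀} with v(x) → 0 as |x| → ∞. Suppose there is a constant C₁ > 0 such that for every R ≥ R₀, sup_{|x| ≥ R} |Δv(x) − v(x)| ≤ C₁ (sup_{|x| ≥ R} |v(x)|)². Then there exist constants m > 0 and C > 0 such that |v(x)| ≤ C e^{−m|x|} for all |x| ≥ R₀. -/

import Mathlib

open MeasureTheory Filter

/-- The Euclidean Laplacian on `ℝ²`: the sum of the two pure second partial derivatives. -/
noncomputable def lap2 (f : EuclideanSpace ℝ (Fin 2) → ℝ) (x : EuclideanSpace ℝ (Fin 2)) : ℝ :=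
  ∑ i : Fin 2, iteratedFDeriv ℝ 2 f x ![EuclideanSpace.single i 1, EuclideanSpace.single i 1]

open Set in

lemma line_package {E : Type*} [NormedAddCommGroup E] [NormedSpace ℝ E]
    {f : E → ℝ} {x : E} (hf : ContDiffAt ℝ 2 f x) (e : E) :
    (∀ᶠ t : ℝ in nhds 0, HasDerivAt (fun s => f (x + s • e)) (fderiv ℝ f (x + t • e) e) t) ∧
    HasDerivAt (fun t : ℝ => fderiv ℝ f (x + t • e) e) (iteratedFDeriv ℝ 2 f x ![e, e]) 0 := by
  have hline : ∀ t : ℝ, HasDerivAt (fun s : ℝ => x + s • e) e t := by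
    intro t
    simpa using ((hasDerivAt_id t).smul_const e).const_add x
  obtain ⟨u, hu, hcd⟩ := hf.contDiffOn (le_refl 2) (by simp)
  rw [mem_nhds_iff] at hu
  obtain ⟨U, hUu, hUo, hxU⟩ := hu
  have hd : DifferentiableOn ℝ f U := (hcd.mono hUu).differentiableOn (by norm_num)
  constructor
  · have hev : ∀ᶠ t : ℝ in nhds 0, x + t • e ∈ U := by
      have hc : Continuous fun t : ℝ => x + t • e := by continuity
      have := hc.tendsto 0
      simp only [zero_smul, add_zero] at this
      exact this (hUo.mem_nhds hxU)
    filter_upwards [hev] with t ht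
    exact ((hd.differentiableAt (hUo.mem_nhds ht)).hasFDerivAt).comp_hasDerivAt t (hline t)
  · have h1 : ContDiffAt ℝ 1 (fderiv ℝ f) x := by
      have : ContDiffAt ℝ (1 + 1 : ℕ) f x := by exact_mod_cast hf
      exact this.fderiv_right (le_refl _)
    have hdd : DifferentiableAt ℝ (fderiv ℝ f) x := h1.differentiableAt (by norm_num)
    have step : HasDerivAt (fun t : ℝ => fderiv ℝ f (x + t • e)) (fderiv ℝ (fderiv ℝ f) x e) 0 := by
      have h0 : x + (0:ℝ) • e = x := by simp
      have hF : HasFDerivAt (fderiv ℝ f) (fderiv ℝ (fderiv ℝ f) x) (x + (0:ℝ) • e) :=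
        h0.symm ▸ hdd.hasFDerivAt
      have := hF.comp_hasDerivAt (x := (0:ℝ)) (hline 0)
      exact this
    have := (ContinuousLinearMap.apply ℝ ℝ e).hasFDerivAt.comp_hasDerivAt 0 step
    simp only [ContinuousLinearMap.apply_apply] at this
    rw [iteratedFDeriv_two_apply]
    simp
    exact this

open Set in

lemma second_deriv_nonpos_of_isLocalMax {g φ : ℝ → ℝ} {d : ℝ}
    (hg : ∀ᶠ t : ℝ in nhds 0, HasDerivAt g (φ t) t)
    (hφ : HasDerivAt φ d 0) (hmax : IsLocalMax g 0) : d ≤ 0 := by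
  by_contra hd
  push_neg at hd
  have hφ0 : φ 0 = 0 := by
    have h1 := hmax.deriv_eq_zero
    have h2 := (hg.self_of_nhds).deriv
    rw [h2] at h1; exact h1
  -- eventually φ t > 0 for t > 0 small
  have hslope := hasDerivAt_iff_tendsto_slope.1 hφ
  have hpos : ∀ᶠ t in nhdsWithin (0:ℝ) (Ioi 0), 0 < φ t := by
    have hev : ∀ᶠ t in nhdsWithin (0:ℝ) {(0:ℝ)}ᶜ, 0 < slope φ 0 t := by
      apply hslope.eventually (eventually_gt_nhds hd)
    have hmono : nhdsWithin (0:ℝ) (Ioi 0) ≤ nhdsWithin (0:ℝ) {(0:ℝ)}ᶜ := by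
      apply nhdsWithin_mono
      intro t ht
      exact ne_of_gt ht
    filter_upwards [hmono hev, self_mem_nhdsWithin] with t ht ht0
    have : slope φ 0 t = φ t / t := by simp [slope, hφ0, div_eq_inv_mul]
    rw [this] at ht
    have := mul_pos ht (show (0:ℝ) < t from ht0)
    rwa [div_mul_cancel₀] at this
    exact ne_of_gt ht0
  have hall : ∀ᶠ t in nhdsWithin (0:ℝ) (Ioi 0),
      0 < φ t ∧ HasDerivAt g (φ t) t ∧ g t ≤ g 0 := by
    exact hpos.and (((hg.and hmax).filter_mono nhdsWithin_le_nhds))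
  obtain ⟨δ, hδ0, hδ⟩ := mem_nhdsGT_iff_exists_Ioc_subset.1 hall
  have hg0 : HasDerivAt g (φ 0) 0 := hg.self_of_nhds
  have hcont : ContinuousOn g (Icc 0 δ) := by
    intro t ht
    rcases eq_or_lt_of_le ht.1 with h | h
    · exact (h ▸ hg0.continuousAt).continuousWithinAt
    · exact ((hδ ⟨h, ht.2⟩).2.1.continuousAt).continuousWithinAt
  have hmono : StrictMonoOn g (Icc 0 δ) := by
    apply strictMonoOn_of_deriv_pos (convex_Icc 0 δ) hcont
    intro t ht
    rw [interior_Icc] at ht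
    have h := hδ ⟨ht.1, le_of_lt ht.2⟩
    rw [h.2.1.deriv]
    exact h.1
  have h1 : g 0 < g δ := hmono ⟨le_refl 0, le_of_lt hδ0⟩ ⟨le_of_lt hδ0, le_refl δ⟩ hδ0
  have h2 : g δ ≤ g 0 := (hδ ⟨hδ0, le_refl δ⟩).2.2
  linarith

open Set in
lemma iteratedFDeriv_le_of_isLocalMax {E : Type*} [NormedAddCommGroup E] [NormedSpace ℝ E]
    {f g : E → ℝ} {x : E} (hf : ContDiffAt ℝ 2 f x) (hg : ContDiffAt ℝ 2 g x)
    (hmax : IsLocalMax (fun y => f y - g y) x) (e : E) :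
    iteratedFDeriv ℝ 2 f x ![e, e] ≤ iteratedFDeriv ℝ 2 g x ![e, e] := by
  obtain ⟨hf1, hf2⟩ := line_package hf e
  obtain ⟨hg1, hg2⟩ := line_package hg e
  have hG : ∀ᶠ t : ℝ in nhds 0, HasDerivAt (fun s => f (x + s • e) - g (x + s • e))
      (fderiv ℝ f (x + t • e) e - fderiv ℝ g (x + t • e) e) t := by
    filter_upwards [hf1, hg1] with t h1 h2; exact h1.sub h2
  have hΦ := hf2.sub hg2
  have hlmax : IsLocalMax (fun t : ℝ => f (x + t • e) - g (x + t • e)) 0 := by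
    have hc : ContinuousAt (fun t : ℝ => x + t • e) 0 := by fun_prop
    have h0 : x + (0:ℝ) • e = x := by simp
    unfold IsLocalMax IsMaxFilter at hmax ⊢
    have hc' : Tendsto (fun t : ℝ => x + t • e) (nhds 0) (nhds x) := by
      simpa [h0] using hc.tendsto
    filter_upwards [hc'.eventually hmax] with t ht
    simpa [h0] using ht
  have := second_deriv_nonpos_of_isLocalMax hG hΦ hlmax
  linarith

lemma lap2_le_of_isLocalMax {f g : EuclideanSpace ℝ (Fin 2) → ℝ} {x : EuclideanSpace ℝ (Fin 2)}
    (hf : ContDiffAt ℝ 2 f x) (hg : ContDiffAt ℝ 2 g x)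
    (hmax : IsLocalMax (fun y => f y - g y) x) : lap2 f x ≤ lap2 g x := by
  apply Finset.sum_le_sum
  intro i _
  exact iteratedFDeriv_le_of_isLocalMax hf hg hmax _

lemma lap2_neg (f : EuclideanSpace ℝ (Fin 2) → ℝ) (x : EuclideanSpace ℝ (Fin 2)) :
    lap2 (fun y => -f y) x = -lap2 f x := by
  have : (fun y => -f y) = -f := rfl
  simp [lap2, this, iteratedFDeriv_neg_apply, Finset.sum_neg_distrib]

open Set in

lemma deriv2_line_exp (A B a c : ℝ) (h : 0 < a^2 + c^2) :
    deriv (deriv (fun s : ℝ => A * Real.exp (-Real.sqrt ((a + s)^2 + c^2)) + B)) 0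
      = A * Real.exp (-Real.sqrt (a^2 + c^2)) *
        (a^2 / Real.sqrt (a^2+c^2) ^ 2 + a^2 / Real.sqrt (a^2+c^2) ^ 3
          - 1 / Real.sqrt (a^2+c^2)) := by
  set r := Real.sqrt (a^2 + c^2) with hr_def
  have hr : 0 < r := Real.sqrt_pos.2 h
  set P : ℝ → ℝ := fun s => (a + s)^2 + c^2 with hP_def
  have hP0 : P 0 = a^2 + c^2 := by simp [hP_def]
  have hP : ∀ s : ℝ, HasDerivAt P (2 * (a + s)) s := by
    intro s
    have h1 : HasDerivAt (fun s : ℝ => a + s) 1 s := (hasDerivAt_id s).const_add a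
    simpa [hP_def] using (h1.pow 2).add_const (c^2)
  have hPev : ∀ᶠ s : ℝ in nhds 0, 0 < P s := by
    have hc : ContinuousAt P 0 := (hP 0).continuousAt
    have := hc.eventually (eventually_gt_nhds (hP0 ▸ h : (0:ℝ) < P 0))
    exact this
  set ρ : ℝ → ℝ := fun s => Real.sqrt (P s) with hρ_def
  have hρ : ∀ s : ℝ, 0 < P s → HasDerivAt ρ ((a + s) / ρ s) s := by
    intro s hs
    have := (Real.hasDerivAt_sqrt (ne_of_gt hs)).comp s (hP s)
    refine this.congr_deriv ?_
    simp only [hρ_def]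
    field_simp
  set Φ : ℝ → ℝ := fun s => A * Real.exp (-ρ s) * (-((a + s) / ρ s)) with hΦ_def
  have hG : ∀ s : ℝ, 0 < P s →
      HasDerivAt (fun s : ℝ => A * Real.exp (-Real.sqrt ((a + s)^2 + c^2)) + B) (Φ s) s := by
    intro s hs
    have := (((hρ s hs).neg).exp.const_mul A).add_const B
    refine this.congr_deriv ?_
    simp only [hΦ_def, Pi.neg_apply]
    ring
  have hderiv_eq : deriv (fun s : ℝ => A * Real.exp (-Real.sqrt ((a + s)^2 + c^2)) + B)
      =ᶠ[nhds (0:ℝ)] Φ := by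
    filter_upwards [hPev] with s hs
    exact (hG s hs).deriv
  rw [hderiv_eq.deriv_eq]
  -- now compute deriv Φ 0
  have hρ0 : ρ 0 = r := by simp [hρ_def, hP0, hr_def]
  have hρ0' : ρ 0 ≠ 0 := by rw [hρ0]; exact ne_of_gt hr
  have hu : HasDerivAt (fun s => (a + s) / ρ s) ((1 * ρ 0 - (a + 0) * ((a + 0) / ρ 0)) / ρ 0 ^ 2) 0 := by
    exact ((hasDerivAt_id 0).const_add a).div (hρ 0 (hP0 ▸ h)) hρ0'
  have hw : HasDerivAt (fun s => Real.exp (-ρ s)) (Real.exp (-ρ 0) * (-((a + 0) / ρ 0))) 0 :=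
    ((hρ 0 (hP0 ▸ h)).neg).exp
  have hΦd : HasDerivAt Φ
      ((Real.exp (-ρ 0) * (-((a + 0) / ρ 0)) * A) * (-((a + 0) / ρ 0))
        + (A * Real.exp (-ρ 0)) * (-((1 * ρ 0 - (a + 0) * ((a + 0) / ρ 0)) / ρ 0 ^ 2))) 0 := by
    have := ((hw.const_mul A).mul hu.neg)
    refine this.congr_deriv ?_
    simp only [Pi.neg_apply]
    ring
  rw [hΦd.deriv, hρ0]
  have hrne : r ≠ 0 := ne_of_gt hr
  field_simp
  ring

open Set in
lemma iteratedFDeriv_two_eq_deriv2 {E : Type*} [NormedAddCommGroup E] [NormedSpace ℝ E]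
    {f : E → ℝ} {x : E} (hf : ContDiffAt ℝ 2 f x) (e : E) :
    iteratedFDeriv ℝ 2 f x ![e, e] = deriv (deriv (fun s : ℝ => f (x + s • e))) 0 := by
  obtain ⟨h1, h2⟩ := line_package hf e
  have heq : deriv (fun s : ℝ => f (x + s • e)) =ᶠ[nhds (0:ℝ)]
      (fun t : ℝ => fderiv ℝ f (x + t • e) e) := by
    filter_upwards [h1] with t ht; exact ht.deriv
  rw [heq.deriv_eq, h2.deriv]

lemma norm_eq_2d (y : EuclideanSpace ℝ (Fin 2)) :
    ‖y‖ = Real.sqrt ((y 0)^2 + (y 1)^2) := by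
  rw [EuclideanSpace.norm_eq]
  simp [Fin.sum_univ_two, sq_abs]

lemma barrier_contDiffAt (A B : ℝ) {x : EuclideanSpace ℝ (Fin 2)} (hx : x ≠ 0) :
    ContDiffAt ℝ 2 (fun y : EuclideanSpace ℝ (Fin 2) => A * Real.exp (-‖y‖) + B) x := by
  exact (((contDiffAt_const (c := A)).mul (contDiffAt_norm ℝ hx).neg.exp).add contDiffAt_const)

lemma lap2_barrier (A B : ℝ) {x : EuclideanSpace ℝ (Fin 2)} (hx : x ≠ 0) :
    lap2 (fun y => A * Real.exp (-‖y‖) + B) x = A * Real.exp (-‖x‖) * (1 - 1 / ‖x‖) := by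
  have hxn : 0 < ‖x‖ := norm_pos_iff.2 hx
  have hpos : 0 < (x 0)^2 + (x 1)^2 := by
    have := hxn
    rw [norm_eq_2d] at this
    exact lt_of_le_of_ne (by positivity) (fun hc => by simp [← hc] at this)
  have hcoord : ∀ (s : ℝ) (i j : Fin 2),
      (x + s • EuclideanSpace.single i (1:ℝ)) j = x j + s * (if j = i then 1 else 0) := by
    intro s i j
    simp [EuclideanSpace.single_apply, PiLp.add_apply, PiLp.smul_apply, smul_eq_mul]
  have hC := barrier_contDiffAt A B hx
  have key0 :
      iteratedFDeriv ℝ 2 (fun y : EuclideanSpace ℝ (Fin 2) => A * Real.exp (-‖y‖) + B) x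
        ![EuclideanSpace.single 0 1, EuclideanSpace.single 0 1]
      = deriv (deriv (fun s : ℝ => A * Real.exp
          (-Real.sqrt ((x 0 + s)^2 + (x 1)^2)) + B)) 0 := by
    rw [iteratedFDeriv_two_eq_deriv2 hC (EuclideanSpace.single 0 1)]
    have hfun : (fun s : ℝ => (fun y : EuclideanSpace ℝ (Fin 2) => A * Real.exp (-‖y‖) + B)
        (x + s • EuclideanSpace.single 0 1))
        = (fun s : ℝ => A * Real.exp (-Real.sqrt ((x 0 + s)^2 + (x 1)^2)) + B) := by
      funext s
      simp only [norm_eq_2d, hcoord s 0 0, hcoord s 0 1]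
      norm_num
    rw [hfun]
  have key1 :
      iteratedFDeriv ℝ 2 (fun y : EuclideanSpace ℝ (Fin 2) => A * Real.exp (-‖y‖) + B) x
        ![EuclideanSpace.single 1 1, EuclideanSpace.single 1 1]
      = deriv (deriv (fun s : ℝ => A * Real.exp
          (-Real.sqrt ((x 1 + s)^2 + (x 0)^2)) + B)) 0 := by
    rw [iteratedFDeriv_two_eq_deriv2 hC (EuclideanSpace.single 1 1)]
    have hfun : (fun s : ℝ => (fun y : EuclideanSpace ℝ (Fin 2) => A * Real.exp (-‖y‖) + B)
        (x + s • EuclideanSpace.single 1 1))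
        = (fun s : ℝ => A * Real.exp (-Real.sqrt ((x 1 + s)^2 + (x 0)^2)) + B) := by
      funext s
      simp only [norm_eq_2d, hcoord s 1 0, hcoord s 1 1]
      norm_num [add_comm]
    rw [hfun]
  have hr02 : Real.sqrt ((x 0)^2 + (x 1)^2) = ‖x‖ := (norm_eq_2d x).symm
  have hsum : ((x 0):ℝ)^2 + (x 1)^2 = ‖x‖^2 := by
    rw [norm_eq_2d, Real.sq_sqrt (by positivity)]
  unfold lap2
  rw [Fin.sum_univ_two, key0, key1]
  rw [deriv2_line_exp A B (x 0) (x 1) hpos]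
  have hpos' : 0 < (x 1)^2 + (x 0)^2 := by linarith
  rw [deriv2_line_exp A B (x 1) (x 0) hpos']
  have hcomm : ((x 1):ℝ)^2 + (x 0)^2 = (x 0)^2 + (x 1)^2 := by ring
  rw [hcomm, hr02]
  have hne : ‖x‖ ≠ 0 := ne_of_gt hxn
  have hkey : (x 0^2 / ‖x‖^2 + x 0^2/‖x‖^3 - 1/‖x‖) + (x 1^2/‖x‖^2 + x 1^2/‖x‖^3 - 1/‖x‖)
      = 1 - 1/‖x‖ := by
    field_simp
    linear_combination (1 + ‖x‖) * hsum
  linear_combination (A * Real.exp (-‖x‖)) * hkey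

open Set in
lemma exterior_comparison (R₀ : ℝ) (hR₀ : 1 ≤ R₀) (u : EuclideanSpace ℝ (Fin 2) → ℝ)
    (hC2 : ContDiffOn ℝ 2 u {x | R₀ ≤ ‖x‖})
    (hsmall : ∀ ε' > (0:ℝ), ∃ R', ∀ y : EuclideanSpace ℝ (Fin 2), R' ≤ ‖y‖ → u y ≤ ε')
    (R S ε : ℝ) (hR : R₀ ≤ R) (hS : 0 < S) (hε : 0 < ε)
    (hub : ∀ y : EuclideanSpace ℝ (Fin 2), R ≤ ‖y‖ → u y ≤ S)
    (hlap : ∀ x : EuclideanSpace ℝ (Fin 2), R ≤ ‖x‖ → u x - ε ≤ lap2 u x) :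
    ∀ x : EuclideanSpace ℝ (Fin 2), R ≤ ‖x‖ → u x ≤ S * Real.exp (R - ‖x‖) + 2 * ε := by
  set A : ℝ := S * Real.exp R with hA_def
  have hA : 0 < A := mul_pos hS (Real.exp_pos R)
  set ψ : EuclideanSpace ℝ (Fin 2) → ℝ := fun y => A * Real.exp (-‖y‖) + 2 * ε with hψ_def
  have hψpos : ∀ y, 0 < ψ y := by
    intro y; have := Real.exp_pos (-‖y‖); positivity
  have hψform : ∀ y : EuclideanSpace ℝ (Fin 2), ψ y = S * Real.exp (R - ‖y‖) + 2 * ε := by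
    intro y
    rw [hψ_def]
    simp only [hA_def]
    rw [show R - ‖y‖ = R + (-‖y‖) by ring, Real.exp_add]
    ring
  intro x hx
  by_contra hcon
  push_neg at hcon
  rw [← hψform x] at hcon
  set w : EuclideanSpace ℝ (Fin 2) → ℝ := fun y => u y - ψ y with hw_def
  set c : ℝ := w x with hc_def
  have hc : 0 < c := by simp [hc_def, hw_def, hcon]
  have hcwx : c ≤ w x := le_of_eq hc_def
  clear hc_def
  clear_value c
  obtain ⟨R', hR'⟩ := hsmall (c / 2) (by linarith)
  set R'' : ℝ := max R R' with hR''_def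
  have hwcont : ContinuousOn w {y : EuclideanSpace ℝ (Fin 2) | R ≤ ‖y‖} := by
    apply ContinuousOn.sub
    · exact (hC2.continuousOn).mono (fun y hy => le_trans hR hy)
    · exact (Continuous.continuousOn (by continuity))
  have hclosed : IsClosed {y : EuclideanSpace ℝ (Fin 2) | R ≤ ‖y‖} :=
    isClosed_le continuous_const continuous_norm
  set K : Set (EuclideanSpace ℝ (Fin 2)) :=
    {y | R ≤ ‖y‖} ∩ w ⁻¹' (Ici c) with hK_def
  have hxK : x ∈ K := ⟨hx, hcwx⟩
  have hKclosed : IsClosed K := hwcont.preimage_isClosed_of_isClosed hclosed isClosed_Ici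
  have hKbdd : Bornology.IsBounded K := by
    apply (Metric.isBounded_closedBall (x := (0:EuclideanSpace ℝ (Fin 2))) (r := R'')).subset
    intro y ⟨hy1, hy2⟩
    rw [Metric.mem_closedBall, dist_zero_right]
    by_contra hyn
    push_neg at hyn
    have h1 : u y ≤ c / 2 := hR' y (le_trans (le_max_right R R') hyn.le)
    have h2 : c ≤ w y := hy2
    have h3 := hψpos y
    have h4 : w y = u y - ψ y := rfl
    rw [h4] at h2
    linarith
  have hKcompact : IsCompact K := Metric.isCompact_of_isClosed_isBounded hKclosed hKbdd
  obtain ⟨x₀, hx₀K, hx₀max⟩ := hKcompact.exists_isMaxOn ⟨x, hxK⟩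
    (hwcont.mono (fun y hy => hy.1))
  have hwx₀ : c ≤ w x₀ := hx₀K.2
  have hglobal : ∀ y : EuclideanSpace ℝ (Fin 2), R ≤ ‖y‖ → w y ≤ w x₀ := by
    intro y hy
    by_cases hyc : c ≤ w y
    · exact hx₀max ⟨hy, hyc⟩
    · push_neg at hyc
      exact hyc.le.trans hwx₀
  have hRx₀ : R < ‖x₀‖ := by
    have hxx : R ≤ ‖x₀‖ := hx₀K.1
    rcases lt_or_eq_of_le hxx with h | h
    · exact h
    · exfalso
      have h1 : u x₀ ≤ S := hub x₀ hxx
      have h2 : ψ x₀ = S + 2 * ε := by rw [hψform, ← h, sub_self, Real.exp_zero]; ring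
      have : w x₀ = u x₀ - ψ x₀ := rfl
      linarith
  have hx₀ne : x₀ ≠ 0 := by
    intro h0
    rw [h0, norm_zero] at hRx₀
    linarith
  have hCAt : ContDiffAt ℝ 2 u x₀ := by
    apply hC2.contDiffAt
    rw [mem_nhds_iff]
    exact ⟨{y | R₀ < ‖y‖}, fun y hy => show R₀ ≤ ‖y‖ from le_of_lt hy,
      isOpen_lt continuous_const continuous_norm, lt_of_le_of_lt hR hRx₀⟩
  have hlocmax : IsLocalMax (fun y => u y - ψ y) x₀ := by
    have hev : ∀ᶠ y : EuclideanSpace ℝ (Fin 2) in nhds x₀, R < ‖y‖ :=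
      (isOpen_lt continuous_const continuous_norm).eventually_mem hRx₀
    filter_upwards [hev] with y hy
    exact hglobal y hy.le
  have hle := lap2_le_of_isLocalMax hCAt (barrier_contDiffAt A (2*ε) hx₀ne) hlocmax
  rw [lap2_barrier A (2*ε) hx₀ne] at hle
  have hbar : A * Real.exp (-‖x₀‖) * (1 - 1 / ‖x₀‖) ≤ A * Real.exp (-‖x₀‖) := by
    have h1 : 0 < ‖x₀‖ := by linarith [hRx₀, hR, hR₀]
    have h2 : 0 ≤ A * Real.exp (-‖x₀‖) := le_of_lt (by positivity)
    nlinarith [div_pos one_pos h1]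
  have hlap' := hlap x₀ (le_of_lt hRx₀)
  have hux₀ : u x₀ = w x₀ + A * Real.exp (-‖x₀‖) + 2 * ε := by
    simp only [hw_def, hψ_def]; ring
  linarith

/-- First decay step: a solution on an exterior region, tending to `0` at infinity, whose
error `Δv − v` is bounded by `C₁ · (sup |v|)²` on every exterior region `{|x| ≥ R}`,
decays at some exponential rate. -/
theorem stmt_3 (R₀ : ℝ) (hR₀ : 1 ≤ R₀) (v : EuclideanSpace ℝ (Fin 2) → ℝ)
    (hC2 : ContDiffOn ℝ 2 v {x | R₀ ≤ ‖x‖})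
    (hlim : Tendsto v (comap (fun x : EuclideanSpace ℝ (Fin 2) => ‖x‖) atTop) (nhds 0))
    (C₁ : ℝ) (hC₁ : 0 < C₁)
    (hquad : ∀ R, R₀ ≤ R → ∀ x, R ≤ ‖x‖ →
      |lap2 v x - v x| ≤ C₁ * (sSup ((fun y => |v y|) '' {y | R ≤ ‖y‖})) ^ 2) :
    ∃ m > (0:ℝ), ∃ C > (0:ℝ), ∀ x, R₀ ≤ ‖x‖ → |v x| ≤ C * Real.exp (-m * ‖x‖) := by
  classical
  set S : ℝ → ℝ := fun R => sSup ((fun y => |v y|) '' {y | R ≤ ‖y‖}) with hS_def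
  have hSrfl : ∀ R : ℝ, S R = sSup ((fun y => |v y|) '' {y | R ≤ ‖y‖}) := fun R => rfl
  have hpt : ∀ R : ℝ, ∃ y : EuclideanSpace ℝ (Fin 2), R ≤ ‖y‖ := by
    intro R
    refine ⟨EuclideanSpace.single 0 (max R 1), ?_⟩
    rw [EuclideanSpace.norm_single, Real.norm_eq_abs]
    exact le_trans (le_max_left R 1) (le_abs_self _)
  have hne : ∀ R : ℝ, ((fun y => |v y|) '' {y | R ≤ ‖y‖}).Nonempty := by
    intro R; obtain ⟨y, hy⟩ := hpt R; exact ⟨|v y|, ⟨y, hy, rfl⟩⟩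
  have hsmall1 : ∀ ε : ℝ, 0 < ε → ∃ T : ℝ,
      ∀ y : EuclideanSpace ℝ (Fin 2), T ≤ ‖y‖ → |v y| ≤ ε := by
    intro ε hε
    have h := Metric.tendsto_nhds.1 hlim ε hε
    rw [eventually_comap] at h
    obtain ⟨T, hT⟩ := eventually_atTop.1 h
    refine ⟨T, fun y hy => ?_⟩
    have := hT ‖y‖ hy y rfl
    rw [dist_zero_right, Real.norm_eq_abs] at this
    exact this.le
  have hbdd : ∀ R : ℝ, R₀ ≤ R → BddAbove ((fun y => |v y|) '' {y | R ≤ ‖y‖}) := by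
    intro R hR
    obtain ⟨T, hT⟩ := hsmall1 1 one_pos
    have hAclosed : IsClosed ({y : EuclideanSpace ℝ (Fin 2) | R ≤ ‖y‖} ∩ {y | ‖y‖ ≤ max T R}) :=
      (isClosed_le continuous_const continuous_norm).inter
        (isClosed_le continuous_norm continuous_const)
    have hAbdd : Bornology.IsBounded
        ({y : EuclideanSpace ℝ (Fin 2) | R ≤ ‖y‖} ∩ {y | ‖y‖ ≤ max T R}) := by
      apply (Metric.isBounded_closedBall (x := (0:EuclideanSpace ℝ (Fin 2))) (r := max T R)).subset
      intro y hy
      rw [Metric.mem_closedBall, dist_zero_right]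
      exact hy.2
    have hAcomp := Metric.isCompact_of_isClosed_isBounded hAclosed hAbdd
    have hvcont : ContinuousOn (fun y => |v y|)
        ({y : EuclideanSpace ℝ (Fin 2) | R ≤ ‖y‖} ∩ {y | ‖y‖ ≤ max T R}) :=
      (hC2.continuousOn.mono (fun y hy => le_trans hR hy.1)).abs
    obtain ⟨M, hM⟩ := hAcomp.bddAbove_image hvcont
    refine ⟨max M 1, ?_⟩
    rintro z ⟨y, hy, rfl⟩
    by_cases hyT : ‖y‖ ≤ max T R
    · exact le_trans (hM ⟨y, ⟨hy, hyT⟩, rfl⟩) (le_max_left M 1)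
    · push_neg at hyT
      exact le_trans (hT y (le_trans (le_max_left T R) hyT.le)) (le_max_right M 1)
  have hS_le : ∀ R : ℝ, R₀ ≤ R → ∀ x : EuclideanSpace ℝ (Fin 2), R ≤ ‖x‖ → |v x| ≤ S R :=
    fun R hR x hx => le_csSup (hbdd R hR) ⟨x, hx, rfl⟩
  have hS0 : ∀ R : ℝ, R₀ ≤ R → 0 ≤ S R := by
    intro R hR
    obtain ⟨y, hy⟩ := hpt R
    exact le_trans (abs_nonneg _) (hS_le R hR y hy)
  have hS_anti : ∀ R R' : ℝ, R₀ ≤ R → R ≤ R' → S R' ≤ S R := by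
    intro R R' hR hRR'
    exact csSup_le_csSup (hbdd R hR) (hne R')
      (Set.image_mono (fun y hy => le_trans hRR' hy))
  have hS_small : ∀ ε : ℝ, 0 < ε → ∃ T : ℝ, R₀ ≤ T ∧ ∀ R : ℝ, T ≤ R → S R ≤ ε := by
    intro ε hε
    obtain ⟨T₀, hT₀⟩ := hsmall1 ε hε
    refine ⟨max T₀ R₀, le_max_right _ _, fun R hR => ?_⟩
    apply csSup_le (hne R)
    rintro z ⟨y, hy, rfl⟩
    exact hT₀ y (le_trans (le_trans (le_max_left T₀ R₀) hR) hy)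
  -- main pointwise comparison
  have hcomp : ∀ R : ℝ, R₀ ≤ R → 0 < S R → ∀ x : EuclideanSpace ℝ (Fin 2), R ≤ ‖x‖ →
      |v x| ≤ S R * Real.exp (R - ‖x‖) + 2 * (C₁ * S R ^ 2) := by
    intro R hR hSR x hx
    have hε : 0 < C₁ * S R ^ 2 := by positivity
    have hub : ∀ y : EuclideanSpace ℝ (Fin 2), R ≤ ‖y‖ → v y ≤ S R :=
      fun y hy => (le_abs_self _).trans (hS_le R hR y hy)
    have hub' : ∀ y : EuclideanSpace ℝ (Fin 2), R ≤ ‖y‖ → -v y ≤ S R :=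
      fun y hy => (neg_le_abs (v y)).trans (hS_le R hR y hy)
    have hsm : ∀ ε' > (0:ℝ), ∃ T, ∀ y : EuclideanSpace ℝ (Fin 2), T ≤ ‖y‖ → v y ≤ ε' := by
      intro ε' h
      obtain ⟨T, hT⟩ := hsmall1 ε' h
      exact ⟨T, fun y hy => (le_abs_self _).trans (hT y hy)⟩
    have hsm' : ∀ ε' > (0:ℝ), ∃ T, ∀ y : EuclideanSpace ℝ (Fin 2), T ≤ ‖y‖ → -v y ≤ ε' := by
      intro ε' h
      obtain ⟨T, hT⟩ := hsmall1 ε' h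
      exact ⟨T, fun y hy => (neg_le_abs _).trans (hT y hy)⟩
    have h1 := exterior_comparison R₀ hR₀ v hC2 hsm R (S R) (C₁ * S R ^ 2) hR hSR hε hub
      (fun z hz => by
        have hq := hquad R hR z hz
        rw [← hSrfl R] at hq
        rw [abs_le] at hq
        linarith [hq.1]) x hx
    have h2 := exterior_comparison R₀ hR₀ (fun y => -v y) hC2.neg hsm' R (S R) (C₁ * S R ^ 2)
      hR hSR hε hub'
      (fun z hz => by
        have hq := hquad R hR z hz
        rw [← hSrfl R] at hq
        rw [abs_le] at hq
        have hgoal : -v z - C₁ * S R ^ 2 ≤ -lap2 v z := by linarith [hq.2]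
        simpa [lap2_neg v z] using hgoal) x hx
    have h2' : -v x ≤ S R * Real.exp (R - ‖x‖) + 2 * (C₁ * S R ^ 2) := h2
    rw [abs_le]
    constructor
    · linarith
    · exact h1
  -- choose R₁
  obtain ⟨R₁, hR₁0, hR₁⟩ := hS_small (1 / (8 * C₁)) (by positivity)
  have hexp2 : Real.exp (-2) ≤ 1 / 4 := by
    have h2 : Real.exp 2 = Real.exp 1 * Real.exp 1 := by
      rw [← Real.exp_add]; norm_num
    have he := Real.exp_one_gt_d9
    have h4 : (4:ℝ) ≤ Real.exp 2 := by nlinarith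
    rw [Real.exp_neg]
    rw [inv_le_comm₀ (by positivity) (by norm_num)]
    linarith
  -- geometric decay
  have hsk : ∀ k : ℕ, S (R₁ + 2 * k) ≤ S R₁ * (1/2) ^ k := by
    intro k
    induction k with
    | zero => simp
    | succ k ih =>
      have hRk : R₀ ≤ R₁ + 2 * k := by
        have : (0:ℝ) ≤ (k:ℝ) := Nat.cast_nonneg k
        linarith
      have hcast : R₁ + 2 * ((k:ℕ)+1:ℕ) = (R₁ + 2 * k) + 2 := by push_cast; ring
      rw [hcast]
      rcases lt_or_eq_of_le (hS0 _ hRk) with hpos | hzero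
      · -- S (R₁+2k) > 0
        have hCk : C₁ * S (R₁ + 2*k) ≤ 1/8 := by
          have h := hR₁ (R₁ + 2*k) (by linarith [Nat.cast_nonneg (α := ℝ) k])
          calc C₁ * S (R₁+2*k) ≤ C₁ * (1/(8*C₁)) := by nlinarith
            _ = 1/8 := by field_simp
        have hstep : S ((R₁ + 2*k) + 2) ≤ S (R₁+2*k) * Real.exp (-2) + 2 * (C₁ * S (R₁+2*k)^2) := by
          apply csSup_le (hne _)
          rintro z ⟨y, hy, rfl⟩
          have hy' : R₁ + 2*k ≤ ‖y‖ := by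
            have : R₁ + 2*k + 2 ≤ ‖y‖ := hy
            linarith
          have := hcomp (R₁+2*k) hRk hpos y hy'
          have hex : Real.exp ((R₁+2*k) - ‖y‖) ≤ Real.exp (-2) := by
            apply Real.exp_le_exp.2
            have : R₁ + 2*k + 2 ≤ ‖y‖ := hy
            linarith
          have hSk0 : 0 ≤ S (R₁+2*k) := hpos.le
          nlinarith
        calc S ((R₁ + 2*k) + 2) ≤ S (R₁+2*k) * Real.exp (-2) + 2 * (C₁ * S (R₁+2*k)^2) := hstep
          _ ≤ S (R₁+2*k) * (1/4) + 2 * (1/8) * S (R₁+2*k) := by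
              have hSk0 : 0 ≤ S (R₁+2*k) := hpos.le
              nlinarith
          _ = S (R₁+2*k) * (1/2) := by ring
          _ ≤ (S R₁ * (1/2)^k) * (1/2) := by nlinarith
          _ = S R₁ * (1/2)^(k+1) := by ring
      · -- S (R₁+2k) = 0
        have h1 : S ((R₁+2*k)+2) ≤ S (R₁+2*k) := hS_anti _ _ hRk (by linarith)
        have h2 : 0 ≤ S R₁ * (1/2:ℝ)^(k+1) :=
          mul_nonneg (hS0 R₁ hR₁0) (by positivity)
        rw [← hzero] at h1
        linarith
  -- final constants
  refine ⟨1/4, by norm_num, (S R₀ + 1) * Real.exp (1/2 + R₁/4),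
    mul_pos (by linarith [hS0 R₀ le_rfl]) (Real.exp_pos _), ?_⟩
  intro x hx
  have hSR₀0 : 0 ≤ S R₀ := hS0 R₀ le_rfl
  have hCexp : Real.exp (-(1/4:ℝ) * ‖x‖) = Real.exp (-(‖x‖/4)) := by ring_nf
  by_cases hxR₁ : ‖x‖ < R₁
  · have h1 : |v x| ≤ S R₀ := hS_le R₀ le_rfl x hx
    have h2 : (1:ℝ) ≤ Real.exp (1/2 + R₁/4) * Real.exp (-(1/4) * ‖x‖) := by
      rw [← Real.exp_add]
      apply Real.one_le_exp
      linarith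
    nlinarith [Real.exp_pos (1/2 + R₁/4), Real.exp_pos (-(1/4:ℝ) * ‖x‖)]
  · push_neg at hxR₁
    set k : ℕ := ⌊(‖x‖ - R₁) / 2⌋₊ with hk_def
    have hdiv0 : 0 ≤ (‖x‖ - R₁) / 2 := by linarith
    have hk1 : (k:ℝ) ≤ (‖x‖ - R₁) / 2 := Nat.floor_le hdiv0
    have hk2 : (‖x‖ - R₁) / 2 < k + 1 := Nat.lt_floor_add_one _
    have hRk : R₀ ≤ R₁ + 2 * k := by
      have : (0:ℝ) ≤ (k:ℝ) := Nat.cast_nonneg k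
      linarith
    have h1 : |v x| ≤ S (R₁ + 2*k) := hS_le _ hRk x (by linarith)
    have h2 : S (R₁ + 2*k) ≤ S R₁ * (1/2)^k := hsk k
    have hSR₁0 : 0 ≤ S R₁ := hS0 R₁ hR₁0
    have hhalf : ((1:ℝ)/2)^k ≤ Real.exp (-(k/2 : ℝ)) := by
      have hexphalf : (1/2:ℝ) ≤ Real.exp (-(1/2)) := by
        rw [Real.exp_neg, le_inv_comm₀ (by norm_num) (Real.exp_pos _)]
        have he := Real.exp_one_lt_d9
        have hsq : Real.exp (1/2) * Real.exp (1/2) = Real.exp 1 := by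
          rw [← Real.exp_add]; norm_num
        nlinarith [Real.exp_pos (1/2:ℝ)]
      calc ((1:ℝ)/2)^k ≤ (Real.exp (-(1/2)))^k :=
            pow_le_pow_left₀ (by norm_num) hexphalf k
        _ = Real.exp (-(k/2:ℝ)) := by
            rw [← Real.exp_nat_mul]; ring_nf
    have h3 : Real.exp (-(k/2:ℝ)) ≤ Real.exp (1/2 + R₁/4 - ‖x‖/4) := by
      apply Real.exp_le_exp.2
      linarith
    have h4 : Real.exp (1/2 + R₁/4 - ‖x‖/4)
        = Real.exp (1/2 + R₁/4) * Real.exp (-(1/4) * ‖x‖) := by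
      rw [← Real.exp_add]; ring_nf
    have h5 : S R₁ ≤ S R₀ + 1 := by
      have := hS_anti R₀ R₁ le_rfl hR₁0
      linarith
    calc |v x| ≤ S R₁ * (1/2)^k := le_trans h1 h2
      _ ≤ S R₁ * Real.exp (-(k/2:ℝ)) := by
          apply mul_le_mul_of_nonneg_left hhalf hSR₁0
      _ ≤ (S R₀ + 1) * Real.exp (1/2 + R₁/4 - ‖x‖/4) := by
          apply mul_le_mul h5 h3 (Real.exp_pos _).le (by linarith)
      _ = (S R₀ + 1) * Real.exp (1/2 + R₁/4) * Real.exp (-(1/4) * ‖x‖) := by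
          rw [h4]; ring
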